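/- The function f(c) = max_{ξ⪰0, Σξᵢ≤nν} min_{p∈Δⁿ} Σᵢ pᵢ(cᵢ + ξᵢ) equals the 'water-filling level': f(c) = max{ γ ∈ ℝ : Σᵢ max(0, γ - cᵢ) ≤ nν }. In particular f is concave and nondecreasing in each coordinate of c. -/

import Mathlib

set_option maxHeartbeats 1000000

/-- The probability simplex in ℝⁿ. -/
def probSimplex (n : ℕ) : Set (Fin n → ℝ) :=
  {p | (∀ i, 0 ≤ p i) ∧ ∑ i, p i = 1}

/-- The slack constraint set `{ξ : ξ ⪰ 0, Σξᵢ ≤ nν}`. -/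
def slackSet (n : ℕ) (ν : ℝ) : Set (Fin n → ℝ) :=
  {ξ | (∀ i, 0 ≤ ξ i) ∧ ∑ i, ξ i ≤ n * ν}

/-- `f(c) = max_{ξ ∈ slackSet} min_{p ∈ Δⁿ} Σᵢ pᵢ (cᵢ + ξᵢ)`. -/
noncomputable def slackObj (n : ℕ) (ν : ℝ) (c : Fin n → ℝ) : ℝ :=
  sSup ((fun ξ => sInf ((fun p => ∑ i, p i * (c i + ξ i)) '' probSimplex n)) ''
    slackSet n ν)

section aux

variable {n : ℕ}

lemma inf_image_simplex (hn : 0 < n) (a : Fin n → ℝ) :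
    sInf ((fun p => ∑ i, p i * a i) '' probSimplex n) =
      Finset.univ.inf' (Finset.univ_nonempty_iff.mpr (Fin.pos_iff_nonempty.mp hn)) a := by
  haveI : Nonempty (Fin n) := Fin.pos_iff_nonempty.mp hn
  set m := Finset.univ.inf' Finset.univ_nonempty a with hm
  apply le_antisymm
  · obtain ⟨j, -, hj⟩ := Finset.exists_mem_eq_inf' (Finset.univ_nonempty (α := Fin n)) a
    apply csInf_le
    · refine ⟨m, ?_⟩
      rintro x ⟨p, ⟨hp0, hp1⟩, rfl⟩
      calc m = ∑ i, p i * m := by rw [← Finset.sum_mul, hp1, one_mul]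
        _ ≤ ∑ i, p i * a i := by
            apply Finset.sum_le_sum
            intro i _
            exact mul_le_mul_of_nonneg_left (Finset.inf'_le a (Finset.mem_univ i)) (hp0 i)
    · refine ⟨fun i => if i = j then 1 else 0, ⟨fun i => by positivity, by simp⟩, ?_⟩
      rw [hm, hj]
      simp [ite_mul]
  · apply le_csInf
    · refine ⟨a (Classical.arbitrary (Fin n)), ?_⟩
      refine ⟨fun i => if i = Classical.arbitrary (Fin n) then 1 else 0,
        ⟨fun i => by positivity, by simp⟩, by simp [ite_mul]⟩
    · rintro x ⟨p, ⟨hp0, hp1⟩, rfl⟩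
      calc m = ∑ i, p i * m := by rw [← Finset.sum_mul, hp1, one_mul]
        _ ≤ ∑ i, p i * a i := by
            apply Finset.sum_le_sum
            intro i _
            exact mul_le_mul_of_nonneg_left (Finset.inf'_le a (Finset.mem_univ i)) (hp0 i)

lemma Tset_bddAbove (hn : 0 < n) (ν : ℝ) (c : Fin n → ℝ) :
    BddAbove {γ : ℝ | ∑ i, max 0 (γ - c i) ≤ n * ν} := by
  refine ⟨c ⟨0, hn⟩ + n * ν, ?_⟩
  intro γ hγ
  have h1 : max 0 (γ - c ⟨0, hn⟩) ≤ ∑ i, max 0 (γ - c i) :=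
    Finset.single_le_sum (f := fun i => max 0 (γ - c i))
      (fun i _ => le_max_left _ _) (Finset.mem_univ (⟨0, hn⟩ : Fin n))
  have := le_trans h1 hγ
  have := le_trans (le_max_right 0 (γ - c ⟨0, hn⟩)) this
  linarith

lemma Tset_nonempty (hn : 0 < n) {ν : ℝ} (hν : 0 ≤ ν) (c : Fin n → ℝ) :
    ∃ γ, γ ∈ {γ : ℝ | ∑ i, max 0 (γ - c i) ≤ n * ν} := by
  haveI : Nonempty (Fin n) := Fin.pos_iff_nonempty.mp hn
  refine ⟨Finset.univ.inf' Finset.univ_nonempty c, ?_⟩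
  have : ∀ i : Fin n, max 0 (Finset.univ.inf' Finset.univ_nonempty c - c i) = 0 := by
    intro i
    have := Finset.inf'_le c (Finset.mem_univ i)
    simp only [max_eq_left_iff]
    linarith
  simp only [Set.mem_setOf_eq, this, Finset.sum_const_zero]
  positivity

lemma slackObj_eq (hn : 0 < n) {ν : ℝ} (hν : 0 ≤ ν) (c : Fin n → ℝ) :
    slackObj n ν c = sSup {γ : ℝ | ∑ i, max 0 (γ - c i) ≤ n * ν} := by
  haveI : Nonempty (Fin n) := Fin.pos_iff_nonempty.mp hn
  have hAT : ((fun ξ => sInf ((fun p => ∑ i, p i * (c i + ξ i)) '' probSimplex n)) ''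
      slackSet n ν) ⊆ {γ : ℝ | ∑ i, max 0 (γ - c i) ≤ n * ν} := by
    rintro x ⟨ξ, ⟨hξ0, hξs⟩, rfl⟩
    have hx : (fun ξ => sInf ((fun p => ∑ i, p i * (c i + ξ i)) '' probSimplex n)) ξ
        = Finset.univ.inf' (Finset.univ_nonempty_iff.mpr (Fin.pos_iff_nonempty.mp hn))
          (fun i => c i + ξ i) := inf_image_simplex hn _
    rw [Set.mem_setOf_eq, hx]
    refine le_trans (Finset.sum_le_sum (fun i _ => ?_)) hξs
    have h1 : Finset.univ.inf' (Finset.univ_nonempty_iff.mpr (Fin.pos_iff_nonempty.mp hn))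
        (fun i => c i + ξ i) ≤ c i + ξ i := Finset.inf'_le _ (Finset.mem_univ i)
    exact max_le (hξ0 i) (by linarith)
  have hTb := Tset_bddAbove hn ν c
  have hAb : BddAbove ((fun ξ => sInf ((fun p => ∑ i, p i * (c i + ξ i)) '' probSimplex n)) ''
      slackSet n ν) := hTb.mono hAT
  rw [slackObj]
  apply le_antisymm
  · refine csSup_le_csSup hTb ⟨_, ⟨0, ⟨fun i => le_refl 0, ?_⟩, rfl⟩⟩ hAT
    simp only [Finset.sum_const_zero, Pi.zero_apply]
    positivity
  · apply csSup_le ⟨_, (Tset_nonempty hn hν c).choose_spec⟩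
    intro γ hγ
    have hmem : (fun i => max 0 (γ - c i)) ∈ slackSet n ν := ⟨fun i => le_max_left _ _, hγ⟩
    have hin : sInf ((fun p => ∑ i, p i * (c i + max 0 (γ - c i))) '' probSimplex n) ∈
        ((fun ξ => sInf ((fun p => ∑ i, p i * (c i + ξ i)) '' probSimplex n)) ''
          slackSet n ν) := ⟨fun i => max 0 (γ - c i), hmem, rfl⟩
    refine le_trans ?_ (le_csSup hAb hin)
    rw [inf_image_simplex hn (fun i => c i + max 0 (γ - c i))]
    apply Finset.le_inf'
    intro i _
    have : γ - c i ≤ max 0 (γ - c i) := le_max_right _ _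
    linarith

lemma Tset_closed (ν : ℝ) (c : Fin n → ℝ) :
    IsClosed {γ : ℝ | ∑ i, max 0 (γ - c i) ≤ n * ν} := by
  have : Continuous fun γ : ℝ => ∑ i, max 0 (γ - c i) := by
    apply continuous_finset_sum
    intro i _
    exact continuous_const.max (continuous_id.sub continuous_const)
  exact isClosed_le this continuous_const

end aux

/-- `f` equals the water-filling level `max {γ : Σᵢ max(0, γ - cᵢ) ≤ nν}`; in
particular `f` is concave and nondecreasing in each coordinate of `c`. -/
theorem stmt8 (n : ℕ) (hn : 0 < n) (ν : ℝ) (hν : 0 ≤ ν) :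
    (∀ c : Fin n → ℝ,
      slackObj n ν c = sSup {γ : ℝ | ∑ i, max 0 (γ - c i) ≤ n * ν}) ∧
    ConcaveOn ℝ Set.univ (slackObj n ν) ∧
    (∀ c c' : Fin n → ℝ, c ≤ c' → slackObj n ν c ≤ slackObj n ν c') := by
  have heq : ∀ c : Fin n → ℝ,
      slackObj n ν c = sSup {γ : ℝ | ∑ i, max 0 (γ - c i) ≤ n * ν} :=
    fun c => slackObj_eq hn hν c
  have hmem : ∀ c : Fin n → ℝ,
      slackObj n ν c ∈ {γ : ℝ | ∑ i, max 0 (γ - c i) ≤ n * ν} := by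
    intro c
    rw [heq c]
    exact (Tset_closed ν c).csSup_mem (Tset_nonempty hn hν c) (Tset_bddAbove hn ν c)
  refine ⟨heq, ?_, ?_⟩
  · refine ⟨convex_univ, ?_⟩
    intro c _ c' _ a b ha hb hab
    rw [heq (a • c + b • c')]
    apply le_csSup (Tset_bddAbove hn ν _)
    have h1 := hmem c
    have h2 := hmem c'
    simp only [Set.mem_setOf_eq] at h1 h2 ⊢
    calc ∑ i, max 0 (a • slackObj n ν c + b • slackObj n ν c' - (a • c + b • c') i)
        ≤ ∑ i, (a * max 0 (slackObj n ν c - c i) + b * max 0 (slackObj n ν c' - c' i)) := by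
          apply Finset.sum_le_sum
          intro i _
          simp only [Pi.add_apply, Pi.smul_apply, smul_eq_mul]
          have ha1 : a * (slackObj n ν c - c i) ≤ a * max 0 (slackObj n ν c - c i) :=
            mul_le_mul_of_nonneg_left (le_max_right _ _) ha
          have hb1 : b * (slackObj n ν c' - c' i) ≤ b * max 0 (slackObj n ν c' - c' i) :=
            mul_le_mul_of_nonneg_left (le_max_right _ _) hb
          apply max_le
          · positivity
          · nlinarith
      _ ≤ n * ν := by
          rw [Finset.sum_add_distrib, ← Finset.mul_sum, ← Finset.mul_sum]
          have ka := mul_le_mul_of_nonneg_left h1 ha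
          have kb := mul_le_mul_of_nonneg_left h2 hb
          have e : a * (↑n * ν) + b * (↑n * ν) = ↑n * ν := by
            rw [← add_mul, hab, one_mul]
          linarith
  · intro c c' hcc
    rw [heq c, heq c']
    apply csSup_le_csSup (Tset_bddAbove hn ν c') (Tset_nonempty hn hν c)
    intro γ hγ
    simp only [Set.mem_setOf_eq] at hγ ⊢
    refine le_trans (Finset.sum_le_sum fun i _ => ?_) hγ
    exact max_le_max le_rfl (by have := hcc i; linarith)
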